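/- Consider one step of an s-stage Runge–Kutta discretization of the variational system, δ_{n+1} = δ_n + h Σ_i b_i d_i with d_i = J_i Δ_i, Δ_i = δ_n + h Σ_j a_{ij} d_j, and one step of an s-stage RK discretization of the adjoint system, λ_{n+1} = λ_n + h Σ_i B_i l_i with l_i = -J_i^⊤ Λ_i, Λ_i = λ_n + h Σ_j A_{ij} l_j, using the same matrices J_i. If B_i = b_i for all i and b_i A_{ij} + B_j a_{ji} = b_i B_j for all i,j, then λ_{n+1}^⊤ δ_{n+1} = λ_n^⊤ δ_n. -/

import Mathlib

lemma sum_dotProduct' {n m : ℕ} (f : Fin m → Fin n → ℝ) (w : Fin n → ℝ) :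
    dotProduct (∑ i, f i) w = ∑ i, dotProduct (f i) w := by
  simp only [dotProduct, Finset.sum_apply, Finset.sum_mul]
  rw [Finset.sum_comm]

lemma dotProduct_sum' {n m : ℕ} (f : Fin m → Fin n → ℝ) (w : Fin n → ℝ) :
    dotProduct w (∑ i, f i) = ∑ i, dotProduct w (f i) := by
  simp only [dotProduct, Finset.sum_apply, Finset.mul_sum]
  rw [Finset.sum_comm]



/-- One RK step for the variational system and one RK step for the adjoint
system with coefficients satisfying the adjointness conditions conserve the
inner product `λ ⬝ᵥ δ`. -/
theorem rk_adjoint_step_conserves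
    (d s : ℕ) (h : ℝ)
    (a A : Fin s → Fin s → ℝ) (b B : Fin s → ℝ)
    (J : Fin s → Matrix (Fin d) (Fin d) ℝ)
    (δn δn1 lamn lamn1 : Fin d → ℝ)
    (dk Δ l Λ : Fin s → (Fin d → ℝ))
    (hδ : δn1 = δn + h • ∑ i, b i • dk i)
    (hd : ∀ i, dk i = (J i).mulVec (Δ i))
    (hΔ : ∀ i, Δ i = δn + h • ∑ j, a i j • dk j)
    (hlam : lamn1 = lamn + h • ∑ i, B i • l i)
    (hl : ∀ i, l i = -((J i).transpose.mulVec (Λ i)))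
    (hΛ : ∀ i, Λ i = lamn + h • ∑ j, A i j • l j)
    (hB : ∀ i, B i = b i)
    (hAB : ∀ i j, b i * A i j + B j * a j i = b i * B j) :
    dotProduct lamn1 δn1 = dotProduct lamn δn := by
  have key1 : ∀ i, dotProduct (Λ i) (dk i) = - dotProduct (l i) (Δ i) := by
    intro i
    rw [hd, hl, Matrix.dotProduct_mulVec, Matrix.mulVec_transpose, neg_dotProduct, neg_neg]
  have hlamn : ∀ i, lamn = Λ i - h • ∑ j, A i j • l j := by
    intro i; rw [hΛ i]; abel
  have hδn : ∀ i, δn = Δ i - h • ∑ j, a i j • dk j := by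
    intro i; rw [hΔ i]; abel
  have key2 : ∀ i, b i * (dotProduct lamn (dk i)) + B i * (dotProduct (l i) δn)
      = -h * ∑ j, (b i * A i j * dotProduct (l j) (dk i)
                   + B i * a i j * dotProduct (l i) (dk j)) := by
    intro i
    rw [hlamn i, hδn i]
    simp only [sub_dotProduct, dotProduct_sub, smul_dotProduct,
      dotProduct_smul, sum_dotProduct', dotProduct_sum', smul_eq_mul, key1 i, hB i]
    have e : (∑ j, (b i * A i j * dotProduct (l j) (dk i)
                   + b i * a i j * dotProduct (l i) (dk j)))
        = b i * ∑ j, A i j * dotProduct (l j) (dk i)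
          + b i * ∑ j, a i j * dotProduct (l i) (dk j) := by
      rw [Finset.mul_sum, Finset.mul_sum, ← Finset.sum_add_distrib]
      exact Finset.sum_congr rfl fun j _ => by ring
    rw [e]; ring
  have key3 : (∑ i, ∑ j, (b i * A i j * dotProduct (l j) (dk i)
                   + B i * a i j * dotProduct (l i) (dk j)))
      = ∑ i, B i * ∑ j, b j * dotProduct (l i) (dk j) := by
    have h1 : (∑ i, ∑ j, b i * A i j * dotProduct (l j) (dk i))
        = ∑ i, ∑ j, b j * A j i * dotProduct (l i) (dk j) := Finset.sum_comm
    simp only [Finset.sum_add_distrib]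
    rw [h1, ← Finset.sum_add_distrib]
    refine Finset.sum_congr rfl fun i _ => ?_
    rw [Finset.mul_sum, ← Finset.sum_add_distrib]
    refine Finset.sum_congr rfl fun j _ => ?_
    linear_combination (dotProduct (l i) (dk j)) * hAB j i
  have keyS : (∑ i, b i * dotProduct lamn (dk i))
      + (∑ i, B i * dotProduct (l i) δn)
      = -h * ∑ i, B i * ∑ j, b j * dotProduct (l i) (dk j) := by
    rw [← Finset.sum_add_distrib, ← key3,
      Finset.sum_congr rfl fun i _ => key2 i, ← Finset.mul_sum]
  rw [hlam, hδ]
  simp only [add_dotProduct, dotProduct_add, smul_dotProduct,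
    dotProduct_smul, sum_dotProduct', dotProduct_sum', smul_eq_mul]
  have hT : (∑ i, b i * ∑ j, B j * dotProduct (l j) (dk i))
      = ∑ i, B i * ∑ j, b j * dotProduct (l i) (dk j) := by
    simp only [Finset.mul_sum]
    rw [Finset.sum_comm]
    exact Finset.sum_congr rfl fun i _ => Finset.sum_congr rfl fun j _ => by ring
  linear_combination h * keyS + h ^ 2 * hT
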